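/- Let M be a matroid and let B₁, B₂ be bases of M at distance two in the basis graph, say B₂ = (B₁ \ {e₁, e₂}) ∪ {f₁, f₂} where e₁ ≠ e₂ are elements of B₁ \ B₂ and f₁ ≠ f₂ are elements of B₂ \ B₁. Then B₁ and B₂ have at least two common neighbors in the basis graph, obtained by pivoting e₁ out of one and e₂ out of the other, and pivoting f₁ into one and f₂ into the other; precisely, either both (B₁ \ {e₁}) ∪ {f₁} and (B₁ \ {e₂}) ∪ {f₂} are bases of M, or both (B₁ \ {e₁}) ∪ {f₂} and (B₁ \ {e₂}) ∪ {f₁} are bases of M. -/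

import Mathlib

lemma aux_pivot_set {α : Type*} (B : Set α) (e e' f f' : α) (he : e ≠ e') (hf : f ≠ f')
    (heB : e ∈ B) (hfB : f ∉ B) :
    insert e (((B \ {e, e'}) ∪ {f, f'}) \ {f}) = insert f' (B \ {e'}) := by
  ext x
  simp only [Set.mem_insert_iff, Set.mem_diff, Set.mem_union, Set.mem_singleton_iff, not_or]
  constructor
  · rintro (rfl | ⟨(⟨hxB, hx1, hx2⟩ | (rfl | rfl)), hx3⟩)
    · exact Or.inr ⟨heB, he⟩
    · exact Or.inr ⟨hxB, hx2⟩
    · exact absurd rfl hx3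
    · exact Or.inl rfl
  · rintro (rfl | ⟨hxB, hx⟩)
    · exact Or.inr ⟨Or.inr (Or.inr rfl), Ne.symm hf⟩
    · by_cases hxe : x = e
      · exact Or.inl hxe
      · exact Or.inr ⟨Or.inl ⟨hxB, hxe, hx⟩, fun h => hfB (h ▸ hxB)⟩

/-- Let `M` be a matroid and let `B₁, B₂` be bases of `M` at distance two
in the basis graph, say `B₂ = (B₁ \ {e₁, e₂}) ∪ {f₁, f₂}` where `e₁ ≠ e₂` are elements of
`B₁ \ B₂` and `f₁ ≠ f₂` are elements of `B₂ \ B₁`.  Then `B₁` and `B₂` have at least two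
common neighbors in the basis graph, obtained by pivoting `e₁` out of one and `e₂` out of
the other, and pivoting `f₁` into one and `f₂` into the other: either both
`(B₁ \ {e₁}) ∪ {f₁}` and `(B₁ \ {e₂}) ∪ {f₂}` are bases of `M`, or both
`(B₁ \ {e₁}) ∪ {f₂}` and `(B₁ \ {e₂}) ∪ {f₁}` are bases of `M`. -/
theorem common_neighbors_of_dist_two {α : Type*} (M : Matroid α) (B₁ B₂ : Set α)
    (hB₁ : M.IsBase B₁) (hB₂ : M.IsBase B₂) (e₁ e₂ f₁ f₂ : α)
    (he : e₁ ≠ e₂) (hf : f₁ ≠ f₂)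
    (he₁ : e₁ ∈ B₁ \ B₂) (he₂ : e₂ ∈ B₁ \ B₂)
    (hf₁ : f₁ ∈ B₂ \ B₁) (hf₂ : f₂ ∈ B₂ \ B₁)
    (hB : B₂ = (B₁ \ {e₁, e₂}) ∪ {f₁, f₂}) :
    (M.IsBase (insert f₁ (B₁ \ {e₁})) ∧ M.IsBase (insert f₂ (B₁ \ {e₂}))) ∨
    (M.IsBase (insert f₂ (B₁ \ {e₁})) ∧ M.IsBase (insert f₁ (B₁ \ {e₂}))) := by
  have hBd : B₂ \ B₁ = {f₁, f₂} := by
    rw [hB]; ext x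
    simp only [Set.mem_diff, Set.mem_union, Set.mem_insert_iff, Set.mem_singleton_iff]
    constructor
    · rintro ⟨h1 | h1, h2⟩
      · exact absurd h1.1 h2
      · exact h1
    · rintro (rfl | rfl)
      · exact ⟨Or.inr (Or.inl rfl), hf₁.2⟩
      · exact ⟨Or.inr (Or.inr rfl), hf₂.2⟩
  have hBd' : B₁ \ B₂ = {e₁, e₂} := by
    have hsub : B₁ \ {e₁, e₂} ⊆ B₂ := by rw [hB]; exact Set.subset_union_left
    ext x
    constructor
    · rintro ⟨hx1, hx2⟩
      by_contra hc
      exact hx2 (hsub ⟨hx1, hc⟩)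
    · rintro (rfl | rfl)
      · exact he₁
      · exact he₂
  -- exchange from B₁ on e₁ and e₂
  obtain ⟨g₁, hg₁, hbg₁⟩ := hB₁.exchange hB₂ he₁
  obtain ⟨g₂, hg₂, hbg₂⟩ := hB₁.exchange hB₂ he₂
  rw [hBd] at hg₁ hg₂
  -- exchange from B₂ on f₁ and f₂
  obtain ⟨k₁, hk₁, hbk₁⟩ := hB₂.exchange hB₁ (by rw [hBd]; exact Or.inl rfl)
  obtain ⟨k₂, hk₂, hbk₂⟩ := hB₂.exchange hB₁ (by rw [hBd]; exact Or.inr rfl)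
  rw [hBd'] at hk₁ hk₂
  have hce : ({e₁, e₂} : Set α) = {e₂, e₁} := Set.pair_comm _ _
  have hcf : ({f₁, f₂} : Set α) = {f₂, f₁} := Set.pair_comm _ _
  have key1 : insert e₁ (B₂ \ {f₁}) = insert f₂ (B₁ \ {e₂}) := by
    rw [hB]; exact aux_pivot_set B₁ e₁ e₂ f₁ f₂ he hf he₁.1 hf₁.2
  have key2 : insert e₂ (B₂ \ {f₁}) = insert f₂ (B₁ \ {e₁}) := by
    rw [hB, hce]; exact aux_pivot_set B₁ e₂ e₁ f₁ f₂ (Ne.symm he) hf he₂.1 hf₁.2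
  have key3 : insert e₁ (B₂ \ {f₂}) = insert f₁ (B₁ \ {e₂}) := by
    rw [hB, hcf]; exact aux_pivot_set B₁ e₁ e₂ f₂ f₁ he (Ne.symm hf) he₁.1 hf₂.2
  have key4 : insert e₂ (B₂ \ {f₂}) = insert f₁ (B₁ \ {e₁}) := by
    rw [hB, hce, hcf]; exact aux_pivot_set B₁ e₂ e₁ f₂ f₁ (Ne.symm he) (Ne.symm hf) he₂.1 hf₂.2
  simp only [Set.mem_insert_iff, Set.mem_singleton_iff] at hg₁ hg₂ hk₁ hk₂
  have h1 : M.IsBase (insert f₁ (B₁ \ {e₁})) ∨ M.IsBase (insert f₂ (B₁ \ {e₁})) := by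
    rcases hg₁ with rfl | rfl
    · exact Or.inl hbg₁
    · exact Or.inr hbg₁
  have h2 : M.IsBase (insert f₁ (B₁ \ {e₂})) ∨ M.IsBase (insert f₂ (B₁ \ {e₂})) := by
    rcases hg₂ with rfl | rfl
    · exact Or.inl hbg₂
    · exact Or.inr hbg₂
  have h3 : M.IsBase (insert f₂ (B₁ \ {e₂})) ∨ M.IsBase (insert f₂ (B₁ \ {e₁})) := by
    rcases hk₁ with rfl | rfl
    · exact Or.inl (key1 ▸ hbk₁)
    · exact Or.inr (key2 ▸ hbk₁)
  have h4 : M.IsBase (insert f₁ (B₁ \ {e₂})) ∨ M.IsBase (insert f₁ (B₁ \ {e₁})) := by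
    rcases hk₂ with rfl | rfl
    · exact Or.inl (key3 ▸ hbk₂)
    · exact Or.inr (key4 ▸ hbk₂)
  rcases h1 with p11 | p12
  · rcases h3 with p22 | p12'
    · exact Or.inl ⟨p11, p22⟩
    · rcases h2 with p21 | p22'
      · exact Or.inr ⟨p12', p21⟩
      · exact Or.inl ⟨p11, p22'⟩
  · rcases h4 with p21 | p11
    · exact Or.inr ⟨p12, p21⟩
    · rcases h2 with p21' | p22
      · exact Or.inr ⟨p12, p21'⟩
      · exact Or.inl ⟨p11, p22⟩
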